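/- Fix two voters N = {1, 2}, a path-connected domain D and a strategy-proof rule f : D^2 → A. Let B ⊆ A with |B| ≥ 3 be such that the subgraph G_∼^B of the adjacency graph G_∼ induced on B is connected. Then: (i) if G_∼^B has no leaf (no vertex with exactly one neighbor in G_∼^B), then f behaves like a dictatorship on B; (ii) if G_∼^B has at least one leaf and f behaves like a dictatorship on {x, y} for every leaf x of G_∼^B and every edge (x, y) of G_∼^B, then f behaves like a dictatorship on B. -/

import Mathlib

open Classical

set_option linter.unusedSectionVars false
set_option linter.unusedVariables false

/-- A strict preference over `A`, represented as a ranking bijection: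
`P k` is the `(k+1)`-th ranked alternative. -/
abbrev Pref (A : Type*) [Fintype A] := Fin (Fintype.card A) ≃ A

variable {A : Type*} [Fintype A] [DecidableEq A] [Nonempty A]

/-- `rk P k` : the `(k+1)`-th ranked alternative of `P` (0-indexed, so `rk P 0 = r₁(P)`). -/
noncomputable def rk (P : Pref A) (k : ℕ) : A :=
  if h : k < Fintype.card A then P ⟨k, h⟩ else Classical.arbitrary A

/-- The peak `r₁(P)`. -/
noncomputable def peak (P : Pref A) : A := rk P 0

/-- The second-ranked alternative `r₂(P)`. -/
noncomputable def second (P : Pref A) : A := rk P 1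

/-- `a` is strictly preferred to `b` under `P`. -/
def prefers (P : Pref A) (a b : A) : Prop := P.symm a < P.symm b

/-- Two preferences are completely reversed. -/
def Reversed (P P' : Pref A) : Prop := ∀ a b : A, prefers P a b ↔ prefers P' b a

/-- A profile lies in the domain `D`. -/
def InDom (D : Set (Pref A)) {n : ℕ} (P : Fin n → Pref A) : Prop := ∀ i, P i ∈ D

/-- Unanimity (an SCF satisfying it is called a rule). -/
def IsRule (D : Set (Pref A)) {n : ℕ} (f : (Fin n → Pref A) → A) : Prop :=
  ∀ P : Fin n → Pref A, InDom D P → ∀ a : A, (∀ i, peak (P i) = a) → f P = a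

/-- Strategy-proofness (relative to the domain `D`). -/
def StrategyProof (D : Set (Pref A)) {n : ℕ} (f : (Fin n → Pref A) → A) : Prop :=
  ∀ P : Fin n → Pref A, InDom D P → ∀ i : Fin n, ∀ Q ∈ D,
    f P = f (Function.update P i Q) ∨ prefers (P i) (f P) (f (Function.update P i Q))

/-- The tops-only property. -/
def TopsOnly (D : Set (Pref A)) {n : ℕ} (f : (Fin n → Pref A) → A) : Prop :=
  ∀ P P' : Fin n → Pref A, InDom D P → InDom D P' →
    (∀ i, peak (P i) = peak (P' i)) → f P = f P'

/-- Anonymity. -/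
def Anonymous (D : Set (Pref A)) {n : ℕ} (f : (Fin n → Pref A) → A) : Prop :=
  ∀ P : Fin n → Pref A, InDom D P → ∀ σ : Equiv.Perm (Fin n), f (P ∘ σ) = f P

/-- `f` behaves like a dictatorship on `B`. -/
def DictatorOn (D : Set (Pref A)) {n : ℕ} (f : (Fin n → Pref A) → A) (B : Set A) : Prop :=
  ∃ i : Fin n, ∀ P : Fin n → Pref A, InDom D P → (∀ j, peak (P j) ∈ B) → f P = peak (P i)

/-- `f` is a dictatorship. -/
def Dictatorship (D : Set (Pref A)) {n : ℕ} (f : (Fin n → Pref A) → A) : Prop :=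
  DictatorOn D f Set.univ

/-- A dictatorial domain. -/
def DictatorialDomain (D : Set (Pref A)) : Prop :=
  ∀ n : ℕ, 2 ≤ n → ∀ f : (Fin n → Pref A) → A,
    IsRule D f → StrategyProof D f → Dictatorship D f

/-- A tops-only domain. -/
def TopsOnlyDomain (D : Set (Pref A)) : Prop :=
  ∀ n : ℕ, 2 ≤ n → ∀ f : (Fin n → Pref A) → A,
    IsRule D f → StrategyProof D f → TopsOnly D f

/-- Adjacency of two alternatives relative to the domain `D`. -/
def DomAdjacent (D : Set (Pref A)) (a b : A) : Prop :=
  ∃ P ∈ D, ∃ P' ∈ D, peak P = a ∧ second P = b ∧ peak P' = b ∧ second P' = a ∧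
    ∀ k : ℕ, 2 ≤ k → rk P k = rk P' k

/-- The adjacency graph `G_∼` of the domain `D`. -/
noncomputable def adjGraph (D : Set (Pref A)) : SimpleGraph A :=
  SimpleGraph.fromRel (DomAdjacent D)

/-- Path-connectedness of the domain. -/
def PathConnectedDom (D : Set (Pref A)) : Prop := (adjGraph D).Connected

/-- Diversity: the domain contains two completely reversed preferences. -/
def Diversity (D : Set (Pref A)) : Prop := ∃ P ∈ D, ∃ P' ∈ D, Reversed P P'

/-- `S(D^a)`: the set of alternatives second-ranked in some preference of `D` with peak `a`. -/
def secondsSet (D : Set (Pref A)) (a : A) : Set A := {b | ∃ P ∈ D, peak P = a ∧ second P = b}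

/-- Leaf symmetry. -/
def LeafSymmetry (D : Set (Pref A)) : Prop :=
  ∀ x : A, (∃! y, (adjGraph D).Adj x y) →
    (∃ u ∈ secondsSet D x, ∃ v ∈ secondsSet D x, u ≠ v) →
    ∃ z ∈ secondsSet D x, ¬ (adjGraph D).Adj x z ∧ x ∈ secondsSet D z

/-- Unidimensionality: path-connectedness, diversity and leaf symmetry. -/
def Unidimensional (D : Set (Pref A)) : Prop :=
  PathConnectedDom D ∧ Diversity D ∧ LeafSymmetry D

/-- The unique seconds property. -/
def UniqueSeconds (D : Set (Pref A)) : Prop := ∃ x b : A, secondsSet D x = {b}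

/-- Minimal richness. -/
def MinimallyRich (D : Set (Pref A)) : Prop := ∀ a : A, ∃ P ∈ D, peak P = a

/-- The vertex set `⟨x, y|T⟩` of the (in a tree, unique) shortest path between `x` and `y`. -/
def intv (T : SimpleGraph A) (x y : A) : Set A :=
  {z | T.dist x z + T.dist z y = T.dist x y}

/-- `a'` is the projection of `a` onto `B` in `T`. -/
def IsProjPt (T : SimpleGraph A) (B : Set A) (a a' : A) : Prop :=
  a' ∈ B ∧ ∀ b ∈ B, a' ∈ intv T a b

/-- The projection `Proj(a, B)` of `a` onto a path-closed set `B` in the tree `T`. -/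
noncomputable def projOn (T : SimpleGraph A) (B : Set A) (a : A) : A :=
  if h : ∃ a', IsProjPt T B a a' then h.choose else a

/-- `Γ(P)`: the vertex set of the minimal subtree of `T` spanning all the peaks. -/
def gammaSet (T : SimpleGraph A) {n : ℕ} (P : Fin n → Pref A) : Set A :=
  {c | ∃ i j : Fin n, c ∈ intv T (peak (P i)) (peak (P j))}

/-- The projection rule on `T` w.r.t. `xbar`. -/
noncomputable def projRule (T : SimpleGraph A) (xbar : A) {n : ℕ}
    (P : Fin n → Pref A) : A :=
  projOn T (gammaSet T P) xbar

/-- Single-peakedness on a tree. -/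
def SinglePeaked (T : SimpleGraph A) (P : Pref A) : Prop :=
  ∀ c d : A, c ≠ d → c ∈ intv T (peak P) d → prefers P c d

/-- Semi-single-peakedness on `T` w.r.t. the threshold `xbar`. -/
def SemiSP (T : SimpleGraph A) (xbar : A) (P : Pref A) : Prop :=
  (∀ c d : A, c ∈ intv T (peak P) xbar → d ∈ intv T (peak P) xbar → c ≠ d →
    c ∈ intv T (peak P) d → prefers P c d) ∧
  (∀ c : A, c ∉ intv T (peak P) xbar →
    prefers P (projOn T (intv T (peak P) xbar) c) c)

/-- A semi-single-peaked domain. -/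
def SemiSPDomain (D : Set (Pref A)) : Prop :=
  ∃ (T : SimpleGraph A) (xbar : A), T.IsTree ∧
    D ⊆ {P | SemiSP T xbar P} ∧ (adjGraph D).Connected

/-- `A^{a⇀b}`: the alternatives whose path to `b` goes through `a`. -/
def sideSet (T : SimpleGraph A) (a b : A) : Set A := {z | a ∈ intv T z b}

/-- `x = max^P(B)`: `x` is `P`'s best alternative of `B`. -/
def IsBestOf (P : Pref A) (x : A) (B : Set A) : Prop :=
  x ∈ B ∧ ∀ y ∈ B, y ≠ x → prefers P x y

/-- `a` and `b` are dual-thresholds in the tree `T`. -/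
def DualThresholds (T : SimpleGraph A) (a b : A) : Prop :=
  a ≠ b ∧ ∀ c : A, c ∉ intv T a b →
    projOn T (intv T a b) c = a ∨ projOn T (intv T a b) c = b

/-- An `(a,b)`-semi-hybrid preference on `T`. -/
def SemiHybridPref (T : SimpleGraph A) (a b : A) (P : Pref A) : Prop :=
  (peak P ∈ sideSet T a b \ {a} → SemiSP T a P ∧ IsBestOf P b (sideSet T b a)) ∧
  (peak P ∈ sideSet T b a \ {b} → SemiSP T b P ∧ IsBestOf P a (sideSet T a b)) ∧
  (peak P ∈ intv T a b → IsBestOf P a (sideSet T a b) ∧ IsBestOf P b (sideSet T b a))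

/-- `x` is a leaf of the subgraph of `G` induced on `B`. -/
def IsLeafOn (G : SimpleGraph A) (B : Set A) (x : A) : Prop :=
  x ∈ B ∧ ∃! y, y ∈ B ∧ G.Adj x y

/-- `D` is an `(a,b)`-semi-hybrid domain on the tree `T`. -/
def SemiHybridDomainOn (D : Set (Pref A)) (T : SimpleGraph A) (a b : A) : Prop :=
  T.IsTree ∧ DualThresholds T a b ∧ D ⊆ {P | SemiHybridPref T a b P} ∧
  (adjGraph D).Connected ∧
  (¬ ∃ (T' : SimpleGraph A) (a' b' : A), T'.IsTree ∧ DualThresholds T' a' b' ∧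
      D ⊆ {P | SemiHybridPref T' a' b' P} ∧ intv T' a' b' ⊂ intv T a b) ∧
  ((adjGraph D).IsTree →
    ∀ x : A, IsLeafOn (adjGraph D) (intv T a b) x →
      ∃ P ∈ D, ¬ SemiSP (adjGraph D) x P)

/-- `D` is a semi-hybrid domain. -/
def SemiHybridDomain (D : Set (Pref A)) : Prop :=
  ∃ (T : SimpleGraph A) (a b : A), SemiHybridDomainOn D T a b

/-- An `(a,b)`-hybrid preference on `T`. -/
def HybridPref (T : SimpleGraph A) (a b : A) (P : Pref A) : Prop :=
  (∀ y z : A, ((y ∈ sideSet T a b ∧ z ∈ sideSet T a b) ∨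
      (y ∈ sideSet T b a ∧ z ∈ sideSet T b a)) → y ≠ z →
    y ∈ intv T (peak P) z → prefers P y z) ∧
  (peak P ∈ sideSet T a b \ {a} → IsBestOf P a (intv T a b)) ∧
  (peak P ∈ sideSet T b a \ {b} → IsBestOf P b (intv T a b))

/-- `D` is an `(a,b)`-hybrid domain on the tree `T`. -/
def HybridDomainOn (D : Set (Pref A)) (T : SimpleGraph A) (a b : A) : Prop :=
  T.IsTree ∧ DualThresholds T a b ∧ D ⊆ {P | HybridPref T a b P} ∧
  (adjGraph D).Connected ∧
  (¬ ∃ (T' : SimpleGraph A) (a' b' : A), T'.IsTree ∧ DualThresholds T' a' b' ∧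
      D ⊆ {P | HybridPref T' a' b' P} ∧ intv T' a' b' ⊂ intv T a b) ∧
  3 ≤ (intv T a b).ncard

/-- `f` is an `(a,b)`-hybrid rule on the tree `T`. -/
def IsHybridRule (D : Set (Pref A)) {n : ℕ} (f : (Fin n → Pref A) → A)
    (T : SimpleGraph A) (a b : A) : Prop :=
  T.IsTree ∧ DualThresholds T a b ∧ 3 ≤ (intv T a b).ncard ∧
  ∃ i : Fin n, ∀ P : Fin n → Pref A, InDom D P →
    (peak (P i) ∈ intv T a b → f P = peak (P i)) ∧
    (peak (P i) ∈ sideSet T a b \ {a} → f P = projOn T (gammaSet T P) a) ∧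
    (peak (P i) ∈ sideSet T b a \ {b} → f P = projOn T (gammaSet T P) b)

/-- The PNT rule on `T` w.r.t. the edge `(x, y)`, with the two distinguished voters `i, j`. -/
noncomputable def pntRule (T : SimpleGraph A) (x y : A) {n : ℕ} (i j : Fin n)
    (P : Fin n → Pref A) : A :=
  if peak (P i) ∈ sideSet T y x then peak (P i)
  else if peak (P j) ∈ sideSet T x y then projOn T (gammaSet T P) x
  else if prefers (P j) x y then x else y

/-- `(x, y)` is a critical spot in `T` for the domain `D`. -/
def CriticalSpot (D : Set (Pref A)) (T : SimpleGraph A) (x y : A) : Prop :=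
  T.Adj x y ∧
  (∀ P ∈ D, peak P ∈ sideSet T x y → SemiSP T y P) ∧
  (∀ P ∈ D, peak P ∈ sideSet T y x → IsBestOf P x (sideSet T x y)) ∧
  (∃ P ∈ D, ∃ P' ∈ D, peak P = peak P' ∧ peak P ∈ sideSet T y x ∧
    prefers P y x ∧ prefers P' x y)

/-- `x` is a path in the graph `G` (pairwise distinct, consecutive vertices adjacent). -/
def IsPathIn (G : SimpleGraph A) {v : ℕ} (x : Fin v → A) : Prop :=
  Function.Injective x ∧
  ∀ (k : ℕ) (h : k + 1 < v), G.Adj (x ⟨k, Nat.lt_of_succ_lt h⟩) (x ⟨k + 1, h⟩)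

/-- `x` is a cycle in the graph `G`. -/
def IsCycleIn (G : SimpleGraph A) {v : ℕ} (x : Fin v → A) : Prop :=
  Function.Injective x ∧
  (∀ (k : ℕ) (h : k + 1 < v), G.Adj (x ⟨k, Nat.lt_of_succ_lt h⟩) (x ⟨k + 1, h⟩)) ∧
  ∀ (h : 0 < v), G.Adj (x ⟨v - 1, Nat.sub_lt h Nat.one_pos⟩) (x ⟨0, h⟩)

/-- The line `L^A` induced by the ranking of the preference `P`. -/
noncomputable def lineOf (P : Pref A) : SimpleGraph A :=
  SimpleGraph.fromRel (fun a b =>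
    ∃ k : ℕ, k + 1 < Fintype.card A ∧ rk P k = a ∧ rk P (k + 1) = b)

/-- The median of three natural numbers. -/
def med3 (a b c : ℕ) : ℕ := max (min a b) (min (max a b) c)

/-- The two-voter profile in which voter `i` reports `Pi` and the other voter reports `Q`. -/
noncomputable def prof2 (i : Fin 2) (Pi Q : Pref A) : Fin 2 → Pref A :=
  Function.update (fun _ => Q) i Pi


-- ### Auxiliary development for Statement 17

lemma rk_lt {P : Pref A} {k : ℕ} (h : k < Fintype.card A) : rk P k = P ⟨k, h⟩ := dif_pos h

lemma peak_eq (hcard : 3 ≤ Fintype.card A) (P : Pref A) : peak P = P ⟨0, by omega⟩ :=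
  rk_lt (by omega)

lemma second_eq (hcard : 3 ≤ Fintype.card A) (P : Pref A) : second P = P ⟨1, by omega⟩ :=
  rk_lt (by omega)

lemma symm_peak (hcard : 3 ≤ Fintype.card A) (P : Pref A) :
    P.symm (peak P) = ⟨0, by omega⟩ := by
  rw [peak_eq hcard]; exact P.symm_apply_apply _

lemma symm_second (hcard : 3 ≤ Fintype.card A) (P : Pref A) :
    P.symm (second P) = ⟨1, by omega⟩ := by
  rw [second_eq hcard]; exact P.symm_apply_apply _

lemma symm_peak_val (hcard : 3 ≤ Fintype.card A) (P : Pref A) :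
    (P.symm (peak P) : ℕ) = 0 := by rw [symm_peak hcard]

lemma symm_second_val (hcard : 3 ≤ Fintype.card A) (P : Pref A) :
    (P.symm (second P) : ℕ) = 1 := by rw [symm_second hcard]

lemma not_prefers_peak (hcard : 3 ≤ Fintype.card A) (P : Pref A) (v : A) :
    ¬ prefers P v (peak P) := by
  intro h
  rw [prefers, Fin.lt_def, symm_peak_val hcard] at h
  omega

lemma prefers_peak (hcard : 3 ≤ Fintype.card A) (P : Pref A) {v : A} (hv : v ≠ peak P) :
    prefers P (peak P) v := by
  rw [prefers, symm_peak hcard, Fin.lt_def]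
  have h1 : P.symm v ≠ P.symm (peak P) := fun h => hv (by
    have := congrArg P h; simpa using this)
  rw [symm_peak hcard] at h1
  have h2 : (P.symm v).1 ≠ 0 := fun h0 => h1 (Fin.ext h0)
  simpa using Nat.pos_of_ne_zero h2

lemma eq_peak_of_prefers_second (hcard : 3 ≤ Fintype.card A) {P : Pref A} {v : A}
    (h : prefers P v (second P)) : v = peak P := by
  rw [prefers, Fin.lt_def, symm_second_val hcard] at h
  have h0 : (P.symm v) = (⟨0, by omega⟩ : Fin (Fintype.card A)) := Fin.ext (by show (P.symm v : ℕ) = 0; omega)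
  have h1 := congrArg P h0
  rw [Equiv.apply_symm_apply] at h1
  rw [h1, peak_eq hcard]

lemma peak_ne_second (hcard : 3 ≤ Fintype.card A) (P : Pref A) : peak P ≠ second P := by
  rw [peak_eq hcard, second_eq hcard]
  intro h
  have := P.injective h
  simp at this

lemma prefers_total {P : Pref A} {u v : A} (h : u ≠ v) : prefers P u v ∨ prefers P v u := by
  have h1 : P.symm u ≠ P.symm v := fun hh => h (by have := congrArg P hh; simpa using this)
  rcases lt_or_gt_of_ne h1 with h' | h'
  · exact Or.inl h'
  · exact Or.inr h'

-- ### witnesses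
def Wit (D : Set (Pref A)) (P P' : Pref A) (x y : A) : Prop :=
  P ∈ D ∧ P' ∈ D ∧ peak P = x ∧ second P = y ∧ peak P' = y ∧ second P' = x ∧
    ∀ k : ℕ, 2 ≤ k → rk P k = rk P' k

lemma Wit.symm {D : Set (Pref A)} {P P' : Pref A} {x y : A} (h : Wit D P P' x y) :
    Wit D P' P y x :=
  ⟨h.2.1, h.1, h.2.2.2.2.1, h.2.2.2.2.2.1, h.2.2.1, h.2.2.2.1,
    fun k hk => (h.2.2.2.2.2.2 k hk).symm⟩

lemma Wit.ne (hcard : 3 ≤ Fintype.card A) {D : Set (Pref A)} {P P' : Pref A} {x y : A}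
    (h : Wit D P P' x y) : x ≠ y := by
  rw [← h.2.2.1, ← h.2.2.2.1]; exact peak_ne_second hcard P

lemma wit_tail_idx (hcard : 3 ≤ Fintype.card A) {D : Set (Pref A)} {P P' : Pref A} {x y : A}
    (h : Wit D P P' x y) {z : A} (hzx : z ≠ x) (hzy : z ≠ y) :
    (P'.symm z : ℕ) = (P.symm z : ℕ) ∧ 2 ≤ (P.symm z : ℕ) := by
  set k := P.symm z with hk
  have hzk : z = P k := by rw [hk, Equiv.apply_symm_apply]
  have hk0 : (k : ℕ) ≠ 0 := by
    intro h0
    apply hzx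
    have hke : k = ⟨0, by omega⟩ := Fin.ext h0
    rw [hzk, hke, ← peak_eq hcard, h.2.2.1]
  have hk1 : (k : ℕ) ≠ 1 := by
    intro h0
    apply hzy
    have hke : k = ⟨1, by omega⟩ := Fin.ext h0
    rw [hzk, hke, ← second_eq hcard, h.2.2.2.1]
  have hk2 : 2 ≤ (k : ℕ) := by omega
  have ht := h.2.2.2.2.2.2 (k : ℕ) hk2
  rw [rk_lt k.isLt, rk_lt k.isLt] at ht
  have hPk : P ⟨(k : ℕ), k.isLt⟩ = z := by rw [Fin.eta]; exact hzk.symm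
  rw [hPk] at ht
  have hs : P'.symm z = ⟨(k : ℕ), k.isLt⟩ := by rw [ht, Equiv.symm_apply_apply]
  rw [hs]
  exact ⟨rfl, hk2⟩

/-- Swap lemma: outcomes that flip between two witnesses must be the top pair. -/
lemma swapL5 (hcard : 3 ≤ Fintype.card A) {D : Set (Pref A)} {P P' : Pref A} {x y : A}
    (hw : Wit D P P' x y) {u v : A} (h1 : prefers P u v) (h2 : prefers P' v u) :
    u = x ∧ v = y := by
  rw [prefers, Fin.lt_def] at h1 h2
  by_cases hux : u = x
  · subst hux
    refine ⟨rfl, ?_⟩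
    have hu' : (P'.symm u : ℕ) = 1 := by
      have h3 : P'.symm u = ⟨1, by omega⟩ := by rw [← hw.2.2.2.2.2.1, symm_second hcard]
      rw [h3]
    have hv0 : (P'.symm v : ℕ) = 0 := by omega
    have h4 : P'.symm v = ⟨0, by omega⟩ := Fin.ext hv0
    have h5 := congrArg P' h4
    rw [Equiv.apply_symm_apply] at h5
    rw [h5, ← peak_eq hcard, hw.2.2.2.2.1]
  · exfalso
    by_cases huy : u = y
    · subst huy
      have h3 : (P'.symm u : ℕ) = 0 := by
        have h4 : P'.symm u = ⟨0, by omega⟩ := by rw [← hw.2.2.2.2.1, symm_peak hcard]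
        rw [h4]
      omega
    · obtain ⟨hequ, h2u⟩ := wit_tail_idx hcard hw hux huy
      by_cases hvx : v = x
      · subst hvx
        have h3 : (P.symm v : ℕ) = 0 := by
          have h4 : P.symm v = ⟨0, by omega⟩ := by rw [← hw.2.2.1, symm_peak hcard]
          rw [h4]
        omega
      · by_cases hvy : v = y
        · subst hvy
          have h3 : (P.symm v : ℕ) = 1 := by
            have h4 : P.symm v = ⟨1, by omega⟩ := by rw [← hw.2.2.2.1, symm_second hcard]
            rw [h4]
          omega
        · obtain ⟨heqv, h2v⟩ := wit_tail_idx hcard hw hvx hvy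
          omega

-- ### two-voter abstract rule
variable {D : Set (Pref A)}

structure TwoSP (D : Set (Pref A)) (F : Pref A → Pref A → A) : Prop where
  sp1 : ∀ Q ∈ D, ∀ Q' ∈ D, ∀ R ∈ D, F Q R = F Q' R ∨ prefers Q (F Q R) (F Q' R)
  sp2 : ∀ Q ∈ D, ∀ R ∈ D, ∀ R' ∈ D, F Q R = F Q R' ∨ prefers R (F Q R) (F Q R')
  un : ∀ Q ∈ D, ∀ R ∈ D, peak Q = peak R → F Q R = peak Q

def Flip (F : Pref A → Pref A → A) : Pref A → Pref A → A := fun Q R => F R Q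

lemma TwoSP.flip {F : Pref A → Pref A → A} (h : TwoSP D F) : TwoSP D (Flip F) where
  sp1 := fun Q hQ Q' hQ' R hR => h.sp2 R hR Q hQ Q' hQ'
  sp2 := fun Q hQ R hR R' hR' => h.sp1 R hR R' hR' Q hQ
  un := fun Q hQ R hR hpk => by rw [Flip, h.un R hR Q hQ hpk.symm, hpk]

/-- Voter 1 gets its peak at every canonical disagreement profile of the ordered edge. -/
def A1 (D : Set (Pref A)) (F : Pref A → Pref A → A) (x y : A) : Prop :=
  ∀ P P', Wit D P P' x y → F P P' = x

def Dom (D : Set (Pref A)) (F : Pref A → Pref A → A) (x y : A) : Prop :=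
  A1 D F x y ∧ A1 D (Flip F) x y

def Won1 (D : Set (Pref A)) (F : Pref A → Pref A → A) (x y : A) : Prop :=
  A1 D F x y ∧ A1 D F y x

lemma won1_comm {F : Pref A → Pref A → A} {x y : A} (h : Won1 D F x y) : Won1 D F y x :=
  ⟨h.2, h.1⟩

section Core
variable (hcard : 3 ≤ Fintype.card A) {F : Pref A → Pref A → A} (hF : TwoSP D F)
include hcard hF

/-- the outcome at a canonical profile lies in the top pair -/
lemma canon_mem {P P' : Pref A} {x y : A} (hw : Wit D P P' x y) :
    F P P' = x ∨ F P P' = y := by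
  have hun : F P' P' = y := by
    rw [hF.un P' hw.2.1 P' hw.2.1 rfl, hw.2.2.2.2.1]
  rcases hF.sp1 P hw.1 P' hw.2.1 P' hw.2.1 with h | h
  · right; rw [h, hun]
  · left
    rw [hun] at h
    have := eq_peak_of_prefers_second hcard (P := P) (v := F P P') (by rwa [hw.2.2.2.1])
    rw [this, hw.2.2.1]

/-- witness independence of the canonical outcome (value x case) -/
lemma wit_indep {P P' Q Q' : Pref A} {x y : A} (hw : Wit D P P' x y)
    (hw' : Wit D Q Q' x y) (h : F P P' = x) : F Q Q' = x := by
  -- step 1 : F Q P' = x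
  have h1 : F Q P' = x := by
    rcases hF.sp1 Q hw'.1 P hw.1 P' hw.2.1 with h' | h'
    · rw [h', h]
    · rw [h] at h'
      exfalso
      rw [← hw'.2.2.1] at h'
      exact not_prefers_peak hcard Q _ h'
  -- step 2 : F Q Q' ∈ {x, y}
  rcases canon_mem hcard hF hw' with h2 | h2
  · exact h2
  · exfalso
    rcases hF.sp2 Q hw'.1 P' hw.2.1 Q' hw'.2.1 with h3 | h3
    · rw [h1, h2] at h3
      exact (hw.ne hcard) h3
    · rw [h1, h2] at h3
      rw [← hw.2.2.2.2.1] at h3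
      exact not_prefers_peak hcard P' x h3

/-- dichotomy at an edge with witnesses -/
lemma dichoA1 {P P' : Pref A} {x y : A} (hw : Wit D P P' x y) :
    A1 D F x y ∨ A1 D (Flip F) y x := by
  rcases canon_mem hcard hF hw with h | h
  · exact Or.inl (fun Q Q' hw' => wit_indep hcard hF hw hw' h)
  · refine Or.inr (fun Q Q' hw' => ?_)
    have : Flip F P' P = y := h
    exact wit_indep hcard hF.flip hw.symm hw' this

/-- P1 : forward propagation of voter-1 canonical wins -/
lemma propP1 {x y z : A} {Q Q' : Pref A} (h1 : A1 D F x y)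
    (hwxy : ∃ P P', Wit D P P' x y) (hwyz : Wit D Q Q' y z) (hzx : z ≠ x) :
    A1 D F y z := by
  obtain ⟨P, P', hw⟩ := hwxy
  have hxy : x ≠ y := hw.ne hcard
  have hyz : y ≠ z := hwyz.ne hcard
  have hPx : F P P' = x := h1 P P' hw
  -- F1 : F P' Q = y  (unanimity, both peaks y)
  have hF1 : F P' Q = y := by
    rw [hF.un P' hw.2.1 Q hwyz.1 (by rw [hw.2.2.2.2.1, hwyz.2.2.1]), hw.2.2.2.2.1]
  -- F2 : F P Q = x
  have hF2 : F P Q = x := by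
    have hmem : F P Q = x ∨ F P Q = y := by
      rcases hF.sp1 P hw.1 P' hw.2.1 Q hwyz.1 with h' | h'
      · right; rw [h', hF1]
      · rcases hF.sp1 P' hw.2.1 P hw.1 Q hwyz.1 with h'' | h''
        · right; rw [← h'', hF1]
        · rw [hF1] at h' h''
          exact Or.inl (swapL5 hcard hw h' h'').1
    rcases hmem with h' | h'
    · exact h'
    · exfalso
      rcases hF.sp2 P hw.1 P' hw.2.1 Q hwyz.1 with h'' | h''
      · rw [hPx, h'] at h''; exact hxy h''
      · rw [hPx, h'] at h''
        rw [← hw.2.2.2.2.1] at h''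
        exact not_prefers_peak hcard P' x h''
  -- F3 : F P Q' = x
  have hF3 : F P Q' = x := by
    rcases hF.sp2 P hw.1 Q hwyz.1 Q' hwyz.2.1 with h' | h'
    · rw [← h', hF2]
    · rcases hF.sp2 P hw.1 Q' hwyz.2.1 Q hwyz.1 with h'' | h''
      · rw [h'', hF2]
      · rw [hF2] at h' h''
        exact absurd (swapL5 hcard hwyz h' h'').1 hxy
  -- F4 : F P' Q' = y
  have hF4 : F P' Q' = y := by
    have hm1 : F P' Q' = x ∨ F P' Q' = y := by
      rcases hF.sp1 P' hw.2.1 P hw.1 Q' hwyz.2.1 with h' | h'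
      · left; rw [h', hF3]
      · rcases hF.sp1 P hw.1 P' hw.2.1 Q' hwyz.2.1 with h'' | h''
        · left; rw [← h'', hF3]
        · rw [hF3] at h' h''
          exact Or.inr (swapL5 hcard hw h'' h').2
    have hm2 : F P' Q' = y ∨ F P' Q' = z := by
      rcases hF.sp2 P' hw.2.1 Q hwyz.1 Q' hwyz.2.1 with h' | h'
      · left; rw [← h', hF1]
      · rcases hF.sp2 P' hw.2.1 Q' hwyz.2.1 Q hwyz.1 with h'' | h''
        · left; rw [h'', hF1]
        · rw [hF1] at h' h''
          exact Or.inr (swapL5 hcard hwyz h' h'').2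
    rcases hm1 with h' | h'
    · rcases hm2 with h'' | h''
      · exact h''
      · exfalso; rw [h'] at h''; exact hzx h''.symm
    · exact h'
  -- F5 : F Q Q' = y
  have hF5 : F Q Q' = y := by
    rcases hF.sp1 Q hwyz.1 P' hw.2.1 Q' hwyz.2.1 with h' | h'
    · rw [h', hF4]
    · rw [hF4] at h'
      exfalso
      rw [← hwyz.2.2.1] at h'
      exact not_prefers_peak hcard Q _ h'
  exact fun R R' hwr => wit_indep hcard hF hwyz hwr hF5

end Core

-- ### option-set chain lemmas
section Core2
variable (hcard : 3 ≤ Fintype.card A) {F : Pref A → Pref A → A} (hF : TwoSP D F)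
include hcard hF

/-- If voter 1 would get its peak reporting something, it gets its peak reporting truth. -/
lemma pinPeak {Q R : Pref A} (hQ : Q ∈ D) (hR : R ∈ D)
    (hO : ∃ Q' ∈ D, F Q' R = peak Q) : F Q R = peak Q := by
  obtain ⟨Q', hQ', hv⟩ := hO
  rcases hF.sp1 Q hQ Q' hQ' R hR with h | h
  · rw [h, hv]
  · rw [hv] at h
    exact absurd h (not_prefers_peak hcard Q _)

/-- N' : a canonically-won alternative enters the option set of any column containing
its edge-partner. -/
lemma chainStep {P P' R : Pref A} {s t : A} (hw : Wit D P P' s t) (h1 : A1 D F s t)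
    (hR : R ∈ D) (ht : ∃ Q ∈ D, F Q R = t) : F P R = s := by
  obtain ⟨Qt, hQt, hFt⟩ := ht
  rcases hF.sp1 P hw.1 Qt hQt R hR with h | h
  · -- F P R = t : impossible by SP of voter 2 against the canonical profile
    rw [hFt] at h
    exfalso
    rcases hF.sp2 P hw.1 P' hw.2.1 R hR with h' | h'
    · rw [h1 P P' hw, h] at h'
      exact hw.ne hcard h'
    · rw [h1 P P' hw, h, ← hw.2.2.2.2.1] at h'
      exact not_prefers_peak hcard P' s h'
  · rw [hFt] at h
    have := eq_peak_of_prefers_second hcard (P := P) (v := F P R) (by rwa [hw.2.2.2.1])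
    rw [this, hw.2.2.1]

/-- Dominance shift along the walk. -/
lemma domShift {x y z : A} (hd : Dom D F x y) (hwxy : ∃ P P', Wit D P P' x y)
    {Q Q' : Pref A} (hwyz : Wit D Q Q' y z) (hzx : z ≠ x) : Dom D F y z :=
  ⟨propP1 hcard hF hd.1 hwxy hwyz hzx,
   propP1 hcard hF.flip hd.2 hwxy hwyz hzx⟩

end Core2

-- ### graph glue
lemma adj_wit {x y : A} (hadj : (adjGraph D).Adj x y) : ∃ P P', Wit D P P' x y := by
  rw [adjGraph, SimpleGraph.fromRel_adj] at hadj
  rcases hadj.2 with h | h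
  · obtain ⟨P, hP, P', hP', h1, h2, h3, h4, h5⟩ := h
    exact ⟨P, P', hP, hP', h1, h2, h3, h4, h5⟩
  · obtain ⟨P, hP, P', hP', h1, h2, h3, h4, h5⟩ := h
    exact ⟨P', P, hP', hP, h3, h4, h1, h2, fun k hk => (h5 k hk).symm⟩

section Walks
variable (hcard : 3 ≤ Fintype.card A) {F : Pref A → Pref A → A} (hF : TwoSP D F)
  {B : Set A}
include hcard hF

/-- No edge of `B` can be dominated, provided dominated edges can always be extended. -/
lemma noDom
    (HX : ∀ u v : A, u ∈ B → v ∈ B → (adjGraph D).Adj u v → Dom D F u v →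
      ∃ z, z ∈ B ∧ (adjGraph D).Adj v z ∧ z ≠ u)
    {u v : A} (hu : u ∈ B) (hv : v ∈ B) (hadj : (adjGraph D).Adj u v) :
    ¬ Dom D F u v := by
  intro hdom
  -- the walk
  let nxt : A → A → A := fun p c =>
    if h : ∃ z, z ∈ B ∧ (adjGraph D).Adj c z ∧ z ≠ p then h.choose else p
  let W : ℕ → A × A := fun n => Nat.rec (u, v) (fun _ pc => (pc.2, nxt pc.1 pc.2)) n
  have hWsucc : ∀ n, W (n + 1) = ((W n).2, nxt (W n).1 (W n).2) := fun n => rfl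
  have hInv : ∀ n, (W n).1 ∈ B ∧ (W n).2 ∈ B ∧ (adjGraph D).Adj (W n).1 (W n).2 ∧
      Dom D F (W n).1 (W n).2 ∧ nxt (W n).1 (W n).2 ≠ (W n).1 := by
    intro n
    induction n with
    | zero =>
      have hex := HX u v hu hv hadj hdom
      refine ⟨hu, hv, hadj, hdom, ?_⟩
      show nxt u v ≠ u
      rw [show nxt u v = hex.choose from dif_pos hex]
      exact hex.choose_spec.2.2
    | succ n ih =>
      obtain ⟨h1, h2, h3, h4, h5⟩ := ih
      have hex := HX _ _ h1 h2 h3 h4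
      have hnxt : nxt (W n).1 (W n).2 = hex.choose := dif_pos hex
      obtain ⟨hz1, hz2, hz3⟩ := hex.choose_spec
      rw [hWsucc n]
      refine ⟨h2, by rw [hnxt]; exact hz1, by rw [hnxt]; exact hz2, ?_, ?_⟩
      · rw [hnxt]
        obtain ⟨P, P', hw⟩ := adj_wit (D := D) hz2
        exact domShift hcard hF h4 (adj_wit h3) hw hz3
      · show nxt (W n).2 (nxt (W n).1 (W n).2) ≠ (W n).2
        have hex2 : ∃ z, z ∈ B ∧ (adjGraph D).Adj (nxt (W n).1 (W n).2) z ∧ z ≠ (W n).2 := by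
          apply HX _ _ h2 (by rw [hnxt]; exact hz1) (by rw [hnxt]; exact hz2)
          rw [hnxt]
          obtain ⟨P, P', hw⟩ := adj_wit (D := D) hz2
          exact domShift hcard hF h4 (adj_wit h3) hw hz3
        rw [show nxt (W n).2 (nxt (W n).1 (W n).2) = hex2.choose from dif_pos hex2]
        exact hex2.choose_spec.2.2
    -- end induction
  -- w sequence
  let w : ℕ → A := fun n => (W n).1
  have hwsu : ∀ n, w (n + 1) = (W n).2 := fun n => rfl
  have hadjw : ∀ n, (adjGraph D).Adj (w n) (w (n + 1)) := fun n => (hInv n).2.2.1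
  have hdomw : ∀ n, Dom D F (w n) (w (n + 1)) := fun n => (hInv n).2.2.2.1
  have hmemw : ∀ n, w n ∈ B := fun n => (hInv n).1
  -- A1 along the walk
  have hA1 : ∀ n, A1 D F (w n) (w (n + 1)) := fun n => (hdomw n).1
  -- pigeonhole
  obtain ⟨i, j, hij, heq⟩ : ∃ i j : ℕ, i < j ∧ w i = w j := by
    obtain ⟨i, j, hne, heq⟩ := Finite.exists_ne_map_eq_of_infinite w
    rcases lt_or_gt_of_ne hne with h | h
    · exact ⟨i, j, h, heq⟩
    · exact ⟨j, i, h, heq.symm⟩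
  set d := j - i with hd
  have hd1 : 1 ≤ d := by omega
  have hji : j = i + d := by omega
  -- the fixed column Y and its partner
  obtain ⟨P, P', hw⟩ := adj_wit (D := D) (hadjw i)
  -- descent
  have hdesc : ∀ t, t ≤ d → ∃ Q ∈ D, F Q P = w (i + d - t) := by
    intro t
    induction t with
    | zero =>
      intro _
      refine ⟨P, hw.1, ?_⟩
      rw [hF.un P hw.1 P hw.1 rfl, hw.2.2.1]
      show w i = w (i + d - 0)
      rw [hji] at heq
      simpa using heq
    | succ t ih =>
      intro hle
      have hprev := ih (by omega)
      have hidx : (i + d - (t + 1)) + 1 = i + d - t := by omega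
      obtain ⟨Pst, Pts, hwst⟩ := adj_wit (D := D) (hadjw (i + d - (t + 1)))
      refine ⟨Pst, hwst.1, ?_⟩
      have := chainStep hcard hF hwst (hA1 _) hw.1 (by rw [hidx]; exact hprev)
      exact this
  -- contradiction
  have hfin := hdesc (d - 1) (by omega)
  have hidx2 : i + d - (d - 1) = i + 1 := by omega
  rw [hidx2] at hfin
  have hp1 : F P' P = w (i + 1) := by
    have hpk : F P' P = peak P' := by
      apply pinPeak hcard hF hw.2.1 hw.1
      rw [hw.2.2.2.2.1]
      exact hfin
    rw [hpk, hw.2.2.2.2.1]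
  have hp2 : F P' P = w i := (hdomw i).2 P P' hw
  rw [hp1] at hp2
  exact (adjGraph D).ne_of_adj (hadjw i) hp2.symm
end Walks

-- ### propagation of voter-1 winning and the dictatorship chain
section Prop1
variable (hcard : 3 ≤ Fintype.card A) {F : Pref A → Pref A → A} (hF : TwoSP D F)
  {B : Set A}
include hcard hF

lemma dom_flip_iff {x y : A} : Dom D (Flip F) x y ↔ Dom D F x y := by
  constructor
  · exact fun h => ⟨h.2, h.1⟩
  · exact fun h => ⟨h.2, h.1⟩

/-- a voter-1 win on a profile plus no dominance upgrades to winning the edge -/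
lemma won1_of_A1 (hnd : ∀ u v : A, u ∈ B → v ∈ B → (adjGraph D).Adj u v → ¬ Dom D F u v)
    {x y : A} (hx : x ∈ B) (hy : y ∈ B) (hadj : (adjGraph D).Adj x y)
    (h1 : A1 D F x y) : Won1 D F x y := by
  refine ⟨h1, ?_⟩
  obtain ⟨P, P', hw⟩ := adj_wit (D := D) hadj.symm
  rcases dichoA1 hcard hF hw with h | h
  · exact h
  · exfalso
    exact hnd x y hx hy hadj ⟨h1, h⟩

/-- winning propagates across adjacent edges -/
lemma won1_step (hnd : ∀ u v : A, u ∈ B → v ∈ B → (adjGraph D).Adj u v → ¬ Dom D F u v)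
    {x y z : A} (hx : x ∈ B) (hy : y ∈ B) (hz : z ∈ B)
    (hadjxy : (adjGraph D).Adj x y) (hadjyz : (adjGraph D).Adj y z)
    (h : Won1 D F x y) : Won1 D F y z := by
  by_cases hzx : z = x
  · subst hzx; exact won1_comm h
  · obtain ⟨Q, Q', hwyz⟩ := adj_wit (D := D) hadjyz
    have h1 : A1 D F y z := propP1 hcard hF h.1 (adj_wit hadjxy) hwyz hzx
    exact won1_of_A1 hcard hF hnd hy hz hadjyz h1

/-- vertex-invariant propagation along walks of the induced graph -/
lemma won1_all (hnd : ∀ u v : A, u ∈ B → v ∈ B → (adjGraph D).Adj u v → ¬ Dom D F u v)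
    (hconn : ((adjGraph D).induce B).Connected)
    {x0 y0 : A} (hx0 : x0 ∈ B) (hy0 : y0 ∈ B) (hadj0 : (adjGraph D).Adj x0 y0)
    (hwon0 : Won1 D F x0 y0) :
    ∀ u v : A, u ∈ B → v ∈ B → (adjGraph D).Adj u v → Won1 D F u v := by
  set Pr : A → Prop := fun p => ∃ q, q ∈ B ∧ (adjGraph D).Adj p q ∧ Won1 D F p q with hPr
  have hstep : ∀ (a c : A), a ∈ B → c ∈ B → (adjGraph D).Adj a c → Pr a → Pr c := by
    intro a c ha hc hac ⟨q, hq, haq, hwon⟩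
    have : Won1 D F a c := won1_step hcard hF hnd hq ha hc haq.symm hac (won1_comm hwon)
    exact ⟨a, ha, hac.symm, won1_comm this⟩
  have hwalk : ∀ {a b : ↥B} (wk : ((adjGraph D).induce B).Walk a b), Pr a.1 → Pr b.1 := by
    intro a b wk
    induction wk with
    | nil => exact id
    | @cons p q r h wk' ih =>
      intro hp
      exact ih (hstep p.1 q.1 p.2 q.2 h hp)
  have hbase : Pr y0 := ⟨x0, hx0, hadj0.symm, won1_comm hwon0⟩
  intro u v hu hv huv
  have hreach := hconn.preconnected ⟨y0, hy0⟩ ⟨u, hu⟩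
  have hPu : Pr u := hreach.elim (fun wk => hwalk wk hbase)
  obtain ⟨q, hq, huq, hwon⟩ := hPu
  by_cases hvq : v = q
  · subst hvq; exact hwon
  · exact won1_step hcard hF hnd hq hu hv huq.symm huv (won1_comm hwon)

/-- the dictatorship chain : voter 1 takes its peak at every profile with peaks in B -/
lemma dict_of_won1 (hconn : ((adjGraph D).induce B).Connected)
    (hwon : ∀ u v : A, u ∈ B → v ∈ B → (adjGraph D).Adj u v → Won1 D F u v) :
    ∀ Q ∈ D, ∀ R ∈ D, peak Q ∈ B → peak R ∈ B → F Q R = peak Q := by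
  intro Q hQ R hR hqB hrB
  set Pr : A → Prop := fun p => ∃ Q' ∈ D, F Q' R = p with hPr
  have hstep : ∀ (a c : A), a ∈ B → c ∈ B → (adjGraph D).Adj a c → Pr a → Pr c := by
    intro a c ha hc hac hp
    obtain ⟨P, P', hwca⟩ := adj_wit (D := D) hac.symm
    have h1 : A1 D F c a := (hwon a c ha hc hac).2
    exact ⟨P, hwca.1, chainStep hcard hF hwca h1 hR hp⟩
  have hwalk : ∀ {a b : ↥B} (wk : ((adjGraph D).induce B).Walk a b), Pr a.1 → Pr b.1 := by
    intro a b wk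
    induction wk with
    | nil => exact id
    | @cons p q r h wk' ih =>
      intro hp
      exact ih (hstep p.1 q.1 p.2 q.2 h hp)
  have hbase : Pr (peak R) := ⟨R, hR, hF.un R hR R hR rfl⟩
  have hreach := hconn.preconnected ⟨peak R, hrB⟩ ⟨peak Q, hqB⟩
  have hPq : Pr (peak Q) := hreach.elim (fun wk => hwalk wk hbase)
  exact pinPeak hcard hF hQ hR hPq

end Prop1

-- ### the concrete two-voter rule

section Concrete
variable {f : (Fin 2 → Pref A) → A}

lemma update2_zero (Q R Q' : Pref A) :
    Function.update (![Q, R] : Fin 2 → Pref A) 0 Q' = ![Q', R] := by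
  funext j
  fin_cases j <;> simp [Function.update]

lemma update2_one (Q R R' : Pref A) :
    Function.update (![Q, R] : Fin 2 → Pref A) 1 R' = ![Q, R'] := by
  funext j
  fin_cases j <;> simp [Function.update]

lemma indom2 {Q R : Pref A} (hQ : Q ∈ D) (hR : R ∈ D) :
    ∀ i : Fin 2, (![Q, R] : Fin 2 → Pref A) i ∈ D := by
  intro i; fin_cases i <;> simpa

lemma twoSP_mk (hrule : IsRule D f) (hsp : StrategyProof D f) :
    TwoSP D (fun Q R => f ![Q, R]) where
  sp1 := by
    intro Q hQ Q' hQ' R hR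
    have h := hsp ![Q, R] (indom2 hQ hR) 0 Q' hQ'
    rw [update2_zero] at h
    simpa using h
  sp2 := by
    intro Q hQ R hR R' hR'
    have h := hsp ![Q, R] (indom2 hQ hR) 1 R' hR'
    rw [update2_one] at h
    simpa using h
  un := by
    intro Q hQ R hR hpk
    exact hrule ![Q, R] (indom2 hQ hR) (peak Q) (by
      intro i; fin_cases i
      · simp
      · simpa using hpk.symm)

end Concrete

-- ### assembly

lemma exists_base {B : Set A} (hB : 3 ≤ B.ncard)
    (hconn : ((adjGraph D).induce B).Connected) :
    ∃ x0 y0 : A, x0 ∈ B ∧ y0 ∈ B ∧ (adjGraph D).Adj x0 y0 := by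
  obtain ⟨a, b, ha, hb, hab⟩ := (Set.one_lt_ncard_iff (Set.toFinite B)).mp (by omega)
  have hreach := hconn.preconnected ⟨a, ha⟩ ⟨b, hb⟩
  refine hreach.elim (fun wk => ?_)
  cases wk with
  | nil => exact absurd rfl hab
  | @cons _ q _ h wk' =>
    exact ⟨a, q.1, ha, q.2, h⟩

lemma profile_eta (P : Fin 2 → Pref A) : P = ![P 0, P 1] := by
  funext j
  fin_cases j <;> simp

lemma master {f : (Fin 2 → Pref A) → A} (hcard : 3 ≤ Fintype.card A)
    (hrule : IsRule D f) (hsp : StrategyProof D f) {B : Set A} (hB : 3 ≤ B.ncard)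
    (hconn : ((adjGraph D).induce B).Connected)
    (hnl : ∀ u v : A, u ∈ B → v ∈ B → (adjGraph D).Adj u v →
      Dom D (fun Q R => f ![Q, R]) u v → ¬ IsLeafOn (adjGraph D) B v) :
    DictatorOn D f B := by
  set F : Pref A → Pref A → A := fun Q R => f ![Q, R] with hFdef
  have hF : TwoSP D F := twoSP_mk hrule hsp
  have HX : ∀ u v : A, u ∈ B → v ∈ B → (adjGraph D).Adj u v → Dom D F u v →
      ∃ z, z ∈ B ∧ (adjGraph D).Adj v z ∧ z ≠ u := by
    intro u v hu hv hadj hdom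
    by_contra hcon
    push_neg at hcon
    exact hnl u v hu hv hadj hdom
      ⟨hv, u, ⟨hu, hadj.symm⟩, fun y hy => hcon y hy.1 hy.2⟩
  have hnd : ∀ u v : A, u ∈ B → v ∈ B → (adjGraph D).Adj u v → ¬ Dom D F u v :=
    fun u v hu hv hadj => noDom hcard hF HX hu hv hadj
  have hndf : ∀ u v : A, u ∈ B → v ∈ B → (adjGraph D).Adj u v → ¬ Dom D (Flip F) u v := by
    intro u v hu hv hadj hdomf
    exact hnd u v hu hv hadj ((dom_flip_iff hcard hF).mp hdomf)
  obtain ⟨x0, y0, hx0, hy0, hadj0⟩ := exists_base hB hconn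
  obtain ⟨P0, P0', hw0⟩ := adj_wit (D := D) hadj0
  rcases dichoA1 hcard hF hw0 with hcase | hcase
  · -- voter 1 dictates
    have hwon0 : Won1 D F x0 y0 := won1_of_A1 hcard hF hnd hx0 hy0 hadj0 hcase
    have hall := won1_all hcard hF hnd hconn hx0 hy0 hadj0 hwon0
    have hdict := dict_of_won1 hcard hF hconn hall
    refine ⟨0, fun P hP hpk => ?_⟩
    have hPe := profile_eta P
    have h1 : F (P 0) (P 1) = peak (P 0) := hdict (P 0) (hP 0) (P 1) (hP 1) (hpk 0) (hpk 1)
    calc f P = F (P 0) (P 1) := congrArg f hPe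
    _ = peak (P 0) := h1
  · -- voter 2 dictates
    have hwon0 : Won1 D (Flip F) y0 x0 :=
      won1_of_A1 hcard hF.flip hndf hy0 hx0 hadj0.symm hcase
    have hall := won1_all hcard hF.flip hndf hconn hy0 hx0 hadj0.symm hwon0
    have hdict := dict_of_won1 hcard hF.flip hconn hall
    refine ⟨1, fun P hP hpk => ?_⟩
    have hPe := profile_eta P
    have h1 : Flip F (P 1) (P 0) = peak (P 1) := hdict (P 1) (hP 1) (P 0) (hP 0) (hpk 1) (hpk 0)
    calc f P = F (P 0) (P 1) := congrArg f hPe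
    _ = Flip F (P 1) (P 0) := rfl
    _ = peak (P 1) := h1


/-- Lemma 4: on a connected induced subgraph `G_∼^B` with
`|B| ≥ 3`, (i) no leaf forces dictatorship on `B`; (ii) if there are leaves and
the rule behaves like a dictatorship on each leaf-edge, then it behaves like a
dictatorship on `B`. -/
theorem stmt17_union2 (D : Set (Pref A)) (hD : D.Nonempty)
    (hcard : 3 ≤ Fintype.card A) (hpc : PathConnectedDom D)
    (f : (Fin 2 → Pref A) → A) (hrule : IsRule D f) (hsp : StrategyProof D f)
    (B : Set A) (hB : 3 ≤ B.ncard)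
    (hc : ((adjGraph D).induce B).Connected) :
    ((∀ z : A, ¬ IsLeafOn (adjGraph D) B z) → DictatorOn D f B) ∧
    ((∃ z : A, IsLeafOn (adjGraph D) B z) →
      (∀ z y : A, IsLeafOn (adjGraph D) B z → y ∈ B → (adjGraph D).Adj z y →
        DictatorOn D f {z, y}) →
      DictatorOn D f B) := by
  constructor
  · intro hno
    exact master hcard hrule hsp hB hc (fun u v _ _ _ _ => hno v)
  · intro _ hdl
    apply master hcard hrule hsp hB hc
    intro u v hu hv hadj hdom hleaf
    obtain ⟨i, hi⟩ := hdl v u hleaf hu hadj.symm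
    obtain ⟨P, P', hw⟩ := adj_wit (D := D) hadj
    have hne : u ≠ v := hw.ne hcard
    have hmem1 : InDom D (![P, P'] : Fin 2 → Pref A) := indom2 hw.1 hw.2.1
    have hmem2 : InDom D (![P', P] : Fin 2 → Pref A) := indom2 hw.2.1 hw.1
    have hpk1 : ∀ j, peak ((![P, P'] : Fin 2 → Pref A) j) ∈ ({v, u} : Set A) := by
      intro j; fin_cases j
      · simp [hw.2.2.1]
      · simp [hw.2.2.2.2.1]
    have hpk2 : ∀ j, peak ((![P', P] : Fin 2 → Pref A) j) ∈ ({v, u} : Set A) := by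
      intro j; fin_cases j
      · simp [hw.2.2.2.2.1]
      · simp [hw.2.2.1]
    have hv1 : f ![P, P'] = u := hdom.1 P P' hw
    have hv2 : f ![P', P] = u := hdom.2 P P' hw
    have e1 := hi ![P, P'] hmem1 hpk1
    have e2 := hi ![P', P] hmem2 hpk2
    fin_cases i
    · rw [hv2] at e2
      simp only [Fin.zero_eta, Matrix.cons_val_zero] at e2
      rw [hw.2.2.2.2.1] at e2
      exact hne e2
    · rw [hv1] at e1
      simp only [Fin.mk_one, Matrix.cons_val_one, Matrix.head_cons, Matrix.cons_val_zero] at e1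
      rw [hw.2.2.2.2.1] at e1
      exact hne e1
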